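/- Define pplx(a, γ) := −a·log(1−γ) − (1−a)·log(γ) with log the natural logarithm. Let a ∈ (1/2, 1), let γ satisfy 1 − a < γ < 1/2, and let Δ satisfy 0 < Δ < γ − (1 − a). Set a' := (pplx(a, γ) + log(γ−Δ)) / (log(γ−Δ) − log(1−γ+Δ)). Then a' < a. -/

import Mathlib

noncomputable def pplx (a γ : ℝ) : ℝ := -a * Real.log (1 - γ) - (1 - a) * Real.log γ

theorem stmt_14 (a γ Δ : ℝ) (ha : 1 / 2 < a) (ha1 : a < 1)
    (hγlo : 1 - a < γ) (hγ : γ < 1 / 2) (hΔ0 : 0 < Δ) (hΔ : Δ < γ - (1 - a)) :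
    (pplx a γ + Real.log (γ - Δ)) / (Real.log (γ - Δ) - Real.log (1 - γ + Δ)) < a := by
  set g := γ - Δ with hg
  have hga : 1 - a < g := by simp [hg]; linarith
  have hg0 : 0 < g := by linarith
  have hgγ : g < γ := by simp [hg]; linarith
  have hg1 : g < 1 / 2 := by linarith
  have hγ0 : 0 < γ := by linarith
  -- f is strictly decreasing on [1-a, γ]
  set f : ℝ → ℝ := fun x => a * Real.log (1 - x) + (1 - a) * Real.log x with hf
  have hanti : StrictAntiOn f (Set.Icc (1 - a) γ) := by
    apply strictAntiOn_of_deriv_neg (convex_Icc _ _)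
    · have hc1 : ContinuousOn (fun x : ℝ => Real.log (1 - x)) (Set.Icc (1 - a) γ) := by
        apply Real.continuousOn_log.comp (continuous_const.sub continuous_id).continuousOn
        intro x hx
        simp only [Set.mem_Icc] at hx
        simp only [Set.mem_compl_iff, Set.mem_singleton_iff, Pi.sub_apply, id_eq, id]
        intro h; nlinarith [hx.1, hx.2]
      have hc2 : ContinuousOn (fun x : ℝ => Real.log x) (Set.Icc (1 - a) γ) := by
        apply Real.continuousOn_log.mono
        intro x hx
        simp only [Set.mem_Icc] at hx
        simp only [Set.mem_compl_iff, Set.mem_singleton_iff]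
        intro h; nlinarith [hx.1]
      exact (continuousOn_const.mul hc1).add (continuousOn_const.mul hc2)
    · intro x hx
      rw [interior_Icc, Set.mem_Ioo] at hx
      have hx0 : 0 < x := by linarith
      have hx1 : x < 1 := by linarith
      have h1 : HasDerivAt (fun y : ℝ => Real.log (1 - y)) ((1 - x)⁻¹ * (-1)) x := by
        exact (Real.hasDerivAt_log (by linarith : (1:ℝ) - x ≠ 0)).comp x
          (((hasDerivAt_id x).const_sub 1))
      have h2 : HasDerivAt f (a * ((1 - x)⁻¹ * (-1)) + (1 - a) * x⁻¹) x := by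
        exact (h1.const_mul a).add ((Real.hasDerivAt_log hx0.ne').const_mul (1 - a))
      rw [h2.deriv]
      have h1x : 0 < 1 - x := by linarith
      rw [show a * ((1 - x)⁻¹ * (-1)) + (1 - a) * x⁻¹
          = ((1 - a) * (1 - x) - a * x) / (x * (1 - x)) by
        field_simp; ring]
      apply div_neg_of_neg_of_pos
      · nlinarith [hx.1]
      · positivity
  have hkey : f γ < f g := hanti (Set.mem_Icc.mpr ⟨le_of_lt hga, le_of_lt hgγ⟩)
    (Set.mem_Icc.mpr ⟨le_of_lt hγlo, le_refl _⟩) hgγ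
  have h1g : (1:ℝ) - γ + Δ = 1 - g := by simp [hg]; ring
  rw [h1g]
  have hlog : Real.log g < Real.log (1 - g) :=
    Real.log_lt_log hg0 (by linarith)
  have hD : Real.log g - Real.log (1 - g) < 0 := by linarith
  rw [div_lt_iff_of_neg hD]
  simp only [hf, pplx] at hkey ⊢
  nlinarith [hkey]
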